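/- Let k ∈ ℝ, let I ⊆ ℝ be an open interval, and let a : I → (0,∞), W₁, W₂ : I → ℝ be differentiable functions satisfying on I: a W₁′ + a′ W₁ = 0, W₁ W₂ = 0, a W₂′ + a′ W₂ = 0, and W₂² a² − W₁² a² = k. Then exactly one of the following holds: (i) k > 0, W₁ ≡ 0, and either W₂ = √k / a or W₂ = −√k / a on I; (ii) k < 0, W₂ ≡ 0, and either W₁ = √(−k) / a or W₁ = −√(−k) / a on I; (iii) k = 0 and W₁ ≡ W₂ ≡ 0 on I. -/

import Mathlib

lemma RW_aux_const_on (I : Set ℝ) (hIopen : IsOpen I) (hIord : I.OrdConnected)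
    (f : ℝ → ℝ) (hdiff : ∀ t ∈ I, DifferentiableAt ℝ f t)
    (hd : ∀ t ∈ I, deriv f t = 0) :
    ∀ x ∈ I, ∀ y ∈ I, f x = f y := by
  intro x hx y hy
  have hconv : Convex ℝ I := hIord.convex
  refine hconv.is_const_of_fderivWithin_eq_zero
    (fun t ht => (hdiff t ht).differentiableWithinAt) ?_ hx hy
  intro z hz
  rw [fderivWithin_of_isOpen hIopen hz]
  have h0 : HasDerivAt f 0 z := (hd z hz) ▸ (hdiff z hz).hasDerivAt
  rw [h0.hasFDerivAt.fderiv]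
  exact ContinuousLinearMap.ext fun w => by simp

/-- Solving the Robertson–Walker flatness (zero-curvature) conditions:
    on an open interval I, differentiable a : I → (0,∞) and W₁, W₂ with
    a W₁′ + a′ W₁ = 0, W₁ W₂ = 0, a W₂′ + a′ W₂ = 0 and W₂²a² − W₁²a² = k
    force exactly one of the three alternatives (i), (ii), (iii). -/
theorem RW_flatness_ODE_solutions (k : ℝ) (I : Set ℝ)
    (hIopen : IsOpen I) (hIord : I.OrdConnected)
    (a W1 W2 : ℝ → ℝ)
    (haDiff : ∀ t ∈ I, DifferentiableAt ℝ a t)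
    (hW1Diff : ∀ t ∈ I, DifferentiableAt ℝ W1 t)
    (hW2Diff : ∀ t ∈ I, DifferentiableAt ℝ W2 t)
    (haPos : ∀ t ∈ I, 0 < a t)
    (heq1 : ∀ t ∈ I, a t * deriv W1 t + deriv a t * W1 t = 0)
    (heq2 : ∀ t ∈ I, W1 t * W2 t = 0)
    (heq3 : ∀ t ∈ I, a t * deriv W2 t + deriv a t * W2 t = 0)
    (heq4 : ∀ t ∈ I, (W2 t) ^ 2 * (a t) ^ 2 - (W1 t) ^ 2 * (a t) ^ 2 = k) :
    (0 < k ∧ (∀ t ∈ I, W1 t = 0) ∧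
        ((∀ t ∈ I, W2 t = Real.sqrt k / a t) ∨ (∀ t ∈ I, W2 t = -(Real.sqrt k) / a t)) ∧
      ¬(k < 0 ∧ (∀ t ∈ I, W2 t = 0) ∧
        ((∀ t ∈ I, W1 t = Real.sqrt (-k) / a t) ∨ (∀ t ∈ I, W1 t = -(Real.sqrt (-k)) / a t))) ∧
      ¬(k = 0 ∧ (∀ t ∈ I, W1 t = 0) ∧ (∀ t ∈ I, W2 t = 0))) ∨
    (¬(0 < k ∧ (∀ t ∈ I, W1 t = 0) ∧
        ((∀ t ∈ I, W2 t = Real.sqrt k / a t) ∨ (∀ t ∈ I, W2 t = -(Real.sqrt k) / a t))) ∧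
      (k < 0 ∧ (∀ t ∈ I, W2 t = 0) ∧
        ((∀ t ∈ I, W1 t = Real.sqrt (-k) / a t) ∨ (∀ t ∈ I, W1 t = -(Real.sqrt (-k)) / a t))) ∧
      ¬(k = 0 ∧ (∀ t ∈ I, W1 t = 0) ∧ (∀ t ∈ I, W2 t = 0))) ∨
    (¬(0 < k ∧ (∀ t ∈ I, W1 t = 0) ∧
        ((∀ t ∈ I, W2 t = Real.sqrt k / a t) ∨ (∀ t ∈ I, W2 t = -(Real.sqrt k) / a t))) ∧
      ¬(k < 0 ∧ (∀ t ∈ I, W2 t = 0) ∧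
        ((∀ t ∈ I, W1 t = Real.sqrt (-k) / a t) ∨ (∀ t ∈ I, W1 t = -(Real.sqrt (-k)) / a t))) ∧
      (k = 0 ∧ (∀ t ∈ I, W1 t = 0) ∧ (∀ t ∈ I, W2 t = 0))) := by
  by_cases hI : I.Nonempty
  case neg =>
    have hvac : ∀ (P : ℝ → Prop), ∀ t ∈ I, P t := by
      intro P t ht; exact absurd ⟨t, ht⟩ hI
    rcases lt_trichotomy k 0 with hk | hk | hk
    · exact Or.inr (Or.inl ⟨fun ⟨h, _⟩ => absurd h (by linarith),
        ⟨hk, hvac _, Or.inl (hvac _)⟩, fun ⟨h, _⟩ => absurd h (by linarith)⟩)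
    · exact Or.inr (Or.inr ⟨fun ⟨h, _⟩ => absurd h (by linarith),
        fun ⟨h, _⟩ => absurd h (by linarith), ⟨hk, hvac _, hvac _⟩⟩)
    · exact Or.inl ⟨hk, hvac _, Or.inl (hvac _),
        fun ⟨h, _⟩ => absurd h (by linarith), fun ⟨h, _⟩ => absurd h (by linarith)⟩
  case pos =>
    obtain ⟨t₀, ht₀⟩ := hI
    -- a*W1 and a*W2 are constant on I
    have hd1 : ∀ t ∈ I, deriv (fun t => a t * W1 t) t = 0 := by
      intro t ht
      rw [show (fun t => a t * W1 t) = a * W1 from rfl, deriv_mul (haDiff t ht) (hW1Diff t ht)]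
      have := heq1 t ht; linarith
    have hd2 : ∀ t ∈ I, deriv (fun t => a t * W2 t) t = 0 := by
      intro t ht
      rw [show (fun t => a t * W2 t) = a * W2 from rfl, deriv_mul (haDiff t ht) (hW2Diff t ht)]
      have := heq3 t ht; linarith
    have hc1 : ∀ t ∈ I, a t * W1 t = a t₀ * W1 t₀ :=
      fun t ht => RW_aux_const_on I hIopen hIord _
        (fun s hs => (haDiff s hs).mul (hW1Diff s hs)) hd1 t ht t₀ ht₀
    have hc2 : ∀ t ∈ I, a t * W2 t = a t₀ * W2 t₀ :=
      fun t ht => RW_aux_const_on I hIopen hIord _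
        (fun s hs => (haDiff s hs).mul (hW2Diff s hs)) hd2 t ht t₀ ht₀
    set c1 := a t₀ * W1 t₀ with hc1def
    set c2 := a t₀ * W2 t₀ with hc2def
    have hW1eq : ∀ t ∈ I, W1 t = c1 / a t := by
      intro t ht
      rw [eq_div_iff (haPos t ht).ne']
      linarith [hc1 t ht, mul_comm (W1 t) (a t)]
    have hW2eq : ∀ t ∈ I, W2 t = c2 / a t := by
      intro t ht
      rw [eq_div_iff (haPos t ht).ne']
      linarith [hc2 t ht, mul_comm (W2 t) (a t)]
    have hmul : c1 * c2 = 0 := by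
      have h := heq2 t₀ ht₀
      have : c1 * c2 = (a t₀)^2 * (W1 t₀ * W2 t₀) := by rw [hc1def, hc2def]; ring
      rw [this, h, mul_zero]
    have hk4 : c2 ^ 2 - c1 ^ 2 = k := by
      have h := heq4 t₀ ht₀
      rw [hc1def, hc2def]; nlinarith [h]
    rcases lt_trichotomy k 0 with hk | hk | hk
    · -- k < 0 : c2 = 0, c1² = -k
      have hc2z : c2 = 0 := by
        rcases mul_eq_zero.mp hmul with h | h
        · nlinarith
        · exact h
      have hc1sq : c1 ^ 2 = -k := by nlinarith
      have habs : Real.sqrt (-k) = |c1| := by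
        rw [← hc1sq, Real.sqrt_sq_eq_abs]
      refine Or.inr (Or.inl ⟨fun ⟨h, _⟩ => absurd h (by linarith), ⟨hk,
        fun t ht => by rw [hW2eq t ht, hc2z, zero_div], ?_⟩,
        fun ⟨h, _⟩ => absurd h (by linarith)⟩)
      rcases abs_cases c1 with ⟨he, _⟩ | ⟨he, _⟩
      · left; intro t ht; rw [hW1eq t ht, habs, he]
      · right; intro t ht; rw [hW1eq t ht, habs, he, neg_neg]
    · -- k = 0 : both zero
      have hsq : c1 ^ 2 = c2 ^ 2 := by linarith
      have hsq2 : (c1 * c2) ^ 2 = 0 := by rw [hmul]; ring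
      have h4 : c1 ^ 4 = 0 := by linear_combination c1 ^ 2 * hsq + hsq2
      have hc1z : c1 = 0 := by
        have := pow_eq_zero_iff (n := 4) (by norm_num) |>.mp h4; exact this
      have hc2z : c2 = 0 := by nlinarith
      exact Or.inr (Or.inr ⟨fun ⟨h, _⟩ => absurd h (by linarith),
        fun ⟨h, _⟩ => absurd h (by linarith), ⟨hk,
        fun t ht => by rw [hW1eq t ht, hc1z, zero_div],
        fun t ht => by rw [hW2eq t ht, hc2z, zero_div]⟩⟩)
    · -- k > 0 : c1 = 0, c2² = k
      have hc1z : c1 = 0 := by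
        rcases mul_eq_zero.mp hmul with h | h
        · exact h
        · nlinarith
      have hc2sq : c2 ^ 2 = k := by nlinarith
      have habs : Real.sqrt k = |c2| := by
        rw [← hc2sq, Real.sqrt_sq_eq_abs]
      refine Or.inl ⟨hk, fun t ht => by rw [hW1eq t ht, hc1z, zero_div], ?_,
        fun ⟨h, _⟩ => absurd h (by linarith), fun ⟨h, _⟩ => absurd h (by linarith)⟩
      rcases abs_cases c2 with ⟨he, _⟩ | ⟨he, _⟩
      · left; intro t ht; rw [hW2eq t ht, habs, he]
      · right; intro t ht; rw [hW2eq t ht, habs, he, neg_neg]
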